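/- Let f, κ : ℝ → EReal be k-convex with (cl f)(0) > 0, and suppose g = max(nat f, κ) (pointwise maximum) is finite at some point. Let ϑ = varthetapp(g). Then: (i) nat g ≥ max(nat f, nat κ) pointwise; (ii) varthetapp(κ) ≤ ϑ; (iii) for every θ < ϑ, g(θ) = nat g(θ) = max(nat f(θ), nat κ(θ)). -/

import Mathlib

open Set Filter Topology

noncomputable section

/-- `f : ℝ → EReal` is convex iff its epigraph is a convex set. -/
def EConvex (f : ℝ → EReal) : Prop :=
  Convex ℝ {p : ℝ × ℝ | f p.1 ≤ (p.2 : EReal)}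

/-- The Fenchel dual `f*(a) = sup_θ (θ·a − f(θ))`. -/
def Fd (f : ℝ → EReal) : ℝ → EReal :=
  fun a => ⨆ θ : ℝ, ((θ * a : ℝ) : EReal) - f θ

/-- The sweep `f°`: strictly positive values are swept to `+∞`. -/
def sweep (f : ℝ → EReal) : ℝ → EReal :=
  fun a => if f a ≤ 0 then f a else ⊤

/-- `speedp f = inf {a | f a > 0}`, as an extended real. -/
def speedp (f : ℝ → EReal) : EReal :=
  sInf ((fun a : ℝ => (a : EReal)) '' {a : ℝ | 0 < f a})

/-- k-convex functions. -/
def KConvex (f : ℝ → EReal) : Prop :=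
  EConvex f ∧ (∃ θ : ℝ, 0 < θ ∧ f θ < ⊤) ∧ (∀ θ : ℝ, θ < 0 → f θ = ⊤)

/-- The closure `cl f`: the greatest lower semicontinuous function beneath `f`. -/
def ecl (f : ℝ → EReal) : ℝ → EReal :=
  fun x => ⨆ g : {g : ℝ → EReal // LowerSemicontinuous g ∧ ∀ y, g y ≤ f y}, g.1 x

/-- r-functions: increasing, convex, somewhere in `(−∞,0)`, left continuous,
and `+∞` whenever strictly positive. -/
def RFunction (r : ℝ → EReal) : Prop :=
  Monotone r ∧ EConvex r ∧ (∃ a : ℝ, ⊥ < r a ∧ r a < 0) ∧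
    (∀ a : ℝ, ContinuousWithinAt r (Set.Iio a) a) ∧
    (∀ a : ℝ, 0 < r a → r a = ⊤)

/-- The greatest lower semicontinuous convex function beneath `f` and `g`. -/
def cv (f g : ℝ → EReal) : ℝ → EReal :=
  fun x => ⨆ h : {h : ℝ → EReal //
    LowerSemicontinuous h ∧ EConvex h ∧ (∀ y, h y ≤ f y) ∧ (∀ y, h y ≤ g y)}, h.1 x

/-- `enat f`: the pointwise sup of convex minorants `g` of `f` with `g θ / θ`
antitone on `(0,∞)`. -/
def enat (f : ℝ → EReal) : ℝ → EReal :=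
  fun x => ⨆ g : {g : ℝ → EReal // EConvex g ∧ (∀ y, g y ≤ f y) ∧
      AntitoneOn (fun θ : ℝ => g θ * ((θ⁻¹ : ℝ) : EReal)) (Set.Ioi 0)}, g.1 x

/-- `varthetapp f = sup {θ | f θ = enat f θ}`. -/
def varthetapp (f : ℝ → EReal) : EReal :=
  sSup ((fun θ : ℝ => (θ : EReal)) '' {θ : ℝ | f θ = enat f θ})

/-- `flt f = ((f*)°)*`. -/
def flt (f : ℝ → EReal) : ℝ → EReal := Fd (sweep (Fd f))

/-- The set where `f` is finite. -/
def Phi (f : ℝ → EReal) : Set ℝ := {θ : ℝ | f θ < ⊤}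

/-- `A⁺`: points in `A` or above a point of `A`. -/
def plusSet (A : Set ℝ) : Set ℝ := {x : ℝ | ∃ a ∈ A, a ≤ x}

/-- The subdifferential of `f` at `φ`. -/
def esubdiff (f : ℝ → EReal) (φ : ℝ) : Set ℝ :=
  {a : ℝ | ∀ θ : ℝ, f φ + ((a * (θ - φ) : ℝ) : EReal) ≤ f θ}

open Classical in
/-- The convex indicator of a set: `0` on `C` and `+∞` off it. -/
def echi (C : Set ℝ) : ℝ → EReal := fun θ => if θ ∈ C then 0 else ⊤

/-! ### Auxiliary lemmas -/

lemma cc_cancel (a : EReal) {c : ℝ} (hc : c ≠ 0) :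
    a * (c : EReal) * ((c⁻¹ : ℝ) : EReal) = a := by
  rw [mul_assoc, ← EReal.coe_mul, mul_inv_cancel₀ hc, EReal.coe_one, mul_one]

lemma cc_above {a : EReal} (h : a ≠ ⊤) : ∃ t : ℝ, a ≤ (t : EReal) := by
  have hgen : ∀ b : EReal, a = b → ∃ t : ℝ, a ≤ (t : EReal) := by
    intro b
    induction b using EReal.rec with
    | bot => exact fun hb => ⟨0, hb ▸ bot_le⟩
    | coe u => exact fun hb => ⟨u, hb.le⟩
    | top => exact fun hb => absurd hb h
  exact hgen a rfl

lemma cc_below {a : EReal} {c : ℝ} (h : a < (c : EReal)) :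
    ∃ t : ℝ, a ≤ (t : EReal) ∧ t < c := by
  have hgen : ∀ b : EReal, a = b → ∃ t : ℝ, a ≤ (t : EReal) ∧ t < c := by
    intro b
    induction b using EReal.rec with
    | bot => exact fun hb => ⟨c - 1, hb ▸ bot_le, by linarith⟩
    | coe u => exact fun hb => ⟨u, hb.le, by rw [hb] at h; exact_mod_cast h⟩
    | top => exact fun hb => absurd (hb ▸ h) (by simp)
  exact hgen a rfl

lemma cc_enat_le (f : ℝ → EReal) (x : ℝ) : enat f x ≤ f x :=
  iSup_le fun g => g.2.2.1 x

lemma cc_le_enat {f h : ℝ → EReal} (h1 : EConvex h) (h2 : ∀ y, h y ≤ f y)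
    (h3 : AntitoneOn (fun θ : ℝ => h θ * ((θ⁻¹ : ℝ) : EReal)) (Set.Ioi 0)) (x : ℝ) :
    h x ≤ enat f x :=
  le_iSup (fun g : {g : ℝ → EReal // EConvex g ∧ (∀ y, g y ≤ f y) ∧
      AntitoneOn (fun θ : ℝ => g θ * ((θ⁻¹ : ℝ) : EReal)) (Set.Ioi 0)} => g.1 x) ⟨h, h1, h2, h3⟩

lemma cc_enat_convex (f : ℝ → EReal) : EConvex (enat f) := by
  intro p hp q hq a b ha hb hab
  simp only [mem_setOf_eq] at hp hq ⊢
  refine iSup_le fun g => ?_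
  have hgp : g.1 p.1 ≤ (p.2 : EReal) := le_trans (cc_le_enat g.2.1 g.2.2.1 g.2.2.2 p.1) hp
  have hgq : g.1 q.1 ≤ (q.2 : EReal) := le_trans (cc_le_enat g.2.1 g.2.2.1 g.2.2.2 q.1) hq
  exact g.2.1 hgp hgq ha hb hab

lemma cc_enat_anti (f : ℝ → EReal) :
    AntitoneOn (fun θ : ℝ => enat f θ * ((θ⁻¹ : ℝ) : EReal)) (Set.Ioi 0) := by
  intro x hx y hy hxy
  simp only [mem_Ioi] at hx hy
  have key : enat f y ≤ (enat f x * ((x⁻¹ : ℝ) : EReal)) * (y : EReal) := by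
    refine iSup_le fun g => ?_
    have h1 : g.1 y * ((y⁻¹ : ℝ) : EReal) ≤ g.1 x * ((x⁻¹ : ℝ) : EReal) :=
      g.2.2.2 hx hy hxy
    have h2 : g.1 x * ((x⁻¹ : ℝ) : EReal) ≤ enat f x * ((x⁻¹ : ℝ) : EReal) :=
      mul_le_mul_of_nonneg_right (cc_le_enat g.2.1 g.2.2.1 g.2.2.2 x)
        (by exact_mod_cast inv_nonneg.2 hx.le)
    calc g.1 y = g.1 y * ((y⁻¹ : ℝ) : EReal) * ((y⁻¹⁻¹ : ℝ) : EReal) := by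
          rw [cc_cancel _ (inv_ne_zero (ne_of_gt hy))]
      _ = g.1 y * ((y⁻¹ : ℝ) : EReal) * ((y : ℝ) : EReal) := by rw [inv_inv]
      _ ≤ (enat f x * ((x⁻¹ : ℝ) : EReal)) * (y : EReal) :=
          mul_le_mul_of_nonneg_right (h1.trans h2) (by exact_mod_cast hy.le)
  calc enat f y * ((y⁻¹ : ℝ) : EReal)
      ≤ (enat f x * ((x⁻¹ : ℝ) : EReal)) * (y : EReal) * ((y⁻¹ : ℝ) : EReal) :=
        mul_le_mul_of_nonneg_right key (by exact_mod_cast inv_nonneg.2 hy.le)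
    _ = enat f x * ((x⁻¹ : ℝ) : EReal) := cc_cancel _ (ne_of_gt hy)

lemma cc_top_prop {e : ℝ → EReal}
    (hanti : AntitoneOn (fun θ : ℝ => e θ * ((θ⁻¹ : ℝ) : EReal)) (Set.Ioi 0))
    {x y : ℝ} (hx : 0 < x) (hxy : x ≤ y) (hy : e y = ⊤) : e x = ⊤ := by
  have hy0 : 0 < y := lt_of_lt_of_le hx hxy
  have h := hanti (mem_Ioi.2 hx) (mem_Ioi.2 hy0) hxy
  simp only at h
  rw [hy, EReal.top_mul_of_pos (by exact_mod_cast inv_pos.2 hy0)] at h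
  have htop : e x * ((x⁻¹ : ℝ) : EReal) = ⊤ := top_le_iff.mp h
  have hgen : ∀ a : EReal, e x = a → e x = ⊤ := by
    intro a
    induction a using EReal.rec with
    | bot =>
        intro hex
        rw [hex, EReal.bot_mul_of_pos (by exact_mod_cast inv_pos.2 hx)] at htop
        exact absurd htop (by simp)
    | coe u =>
        intro hex
        rw [hex, ← EReal.coe_mul] at htop
        exact absurd htop (EReal.coe_ne_top _)
    | top => exact fun hex => hex
  exact hgen (e x) rfl

lemma cc_combo {κ : ℝ → EReal} (hk : EConvex κ) {x y z tx tz : ℝ}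
    (hxy : x < y) (hyz : y < z) (h1 : κ x ≤ (tx : EReal)) (h2 : κ z ≤ (tz : EReal)) :
    κ y ≤ (((z - y) / (z - x) * tx + (y - x) / (z - x) * tz : ℝ) : EReal) := by
  have hxz : (0:ℝ) < z - x := by linarith
  have ha : (0:ℝ) ≤ (z - y) / (z - x) := by
    apply div_nonneg <;> linarith
  have hb : (0:ℝ) ≤ (y - x) / (z - x) := by
    apply div_nonneg <;> linarith
  have hab : (z - y) / (z - x) + (y - x) / (z - x) = 1 := by
    field_simp
    ring
  have hmx : ((x, tx) : ℝ × ℝ) ∈ {p : ℝ × ℝ | κ p.1 ≤ (p.2 : EReal)} := h1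
  have hmz : ((z, tz) : ℝ × ℝ) ∈ {p : ℝ × ℝ | κ p.1 ≤ (p.2 : EReal)} := h2
  have h := hk hmx hmz ha hb hab
  simp only [mem_setOf_eq, Prod.smul_fst, Prod.smul_snd, Prod.fst_add, Prod.snd_add,
    smul_eq_mul] at h
  have hco : (z - y) / (z - x) * x + (y - x) / (z - x) * z = y := by
    field_simp; ring
  rwa [hco] at h

lemma cc_combo_lt_top {κ : ℝ → EReal} (hk : EConvex κ) {x y z : ℝ}
    (hxy : x < y) (hyz : y < z) (h1 : κ x ≠ ⊤) (h2 : κ z ≠ ⊤) : κ y < ⊤ := by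
  obtain ⟨tx, htx⟩ := cc_above h1
  obtain ⟨tz, htz⟩ := cc_above h2
  exact lt_of_le_of_lt (cc_combo hk hxy hyz htx htz) (EReal.coe_lt_top _)

def ccSpike (c : ℝ) (v : EReal) : ℝ → EReal :=
  fun x => if x < c then ⊤ else if x = c then v else ⊥

lemma cc_spike_convex (c : ℝ) (v : EReal) : EConvex (ccSpike c v) := by
  intro p hp q hq a b ha hb hab
  simp only [mem_setOf_eq, Prod.smul_fst, Prod.smul_snd, Prod.fst_add, Prod.snd_add,
    smul_eq_mul] at hp hq ⊢
  have hpc : c ≤ p.1 := by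
    by_contra hlt
    push_neg at hlt
    simp only [ccSpike, if_pos hlt] at hp
    exact absurd hp (by simp)
  have hqc : c ≤ q.1 := by
    by_contra hlt
    push_neg at hlt
    simp only [ccSpike, if_pos hlt] at hq
    exact absurd hq (by simp)
  have hsum : a * c + b * c = c := by rw [← add_mul, hab, one_mul]
  have hp' : a * c ≤ a * p.1 := mul_le_mul_of_nonneg_left hpc ha
  have hq' : b * c ≤ b * q.1 := mul_le_mul_of_nonneg_left hqc hb
  have hc1 : c ≤ a * p.1 + b * q.1 := by linarith
  rcases lt_or_eq_of_le hc1 with hlt | heq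
  · simp only [ccSpike, if_neg (not_lt.2 hlt.le), if_neg (ne_of_gt hlt)]
    exact bot_le
  · rw [← heq]
    simp only [ccSpike, lt_self_iff_false, if_false, eq_self_iff_true, if_true]
    rcases eq_or_lt_of_le ha with ha0 | hapos
    · have hb1 : b = 1 := by linarith
      have hq1 : q.1 = c := by
        rw [← ha0, hb1] at heq; ring_nf at heq; linarith
      simp only [ccSpike, hq1, lt_self_iff_false, if_false, eq_self_iff_true, if_true] at hq
      have hv : a * p.2 + b * q.2 = q.2 := by rw [← ha0, hb1]; ring
      rw [hv]
      exact hq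
    · rcases eq_or_lt_of_le hb with hb0 | hbpos
      · have ha1 : a = 1 := by linarith
        have hp1 : p.1 = c := by
          rw [← hb0, ha1] at heq; ring_nf at heq; linarith
        simp only [ccSpike, hp1, lt_self_iff_false, if_false, eq_self_iff_true, if_true] at hp
        have hv : a * p.2 + b * q.2 = p.2 := by rw [← hb0, ha1]; ring
        rw [hv]
        exact hp
      · have hp1 : p.1 = c := by
          refine le_antisymm ?_ hpc
          by_contra hcon
          push_neg at hcon
          have h1 : a * c < a * p.1 := mul_lt_mul_of_pos_left hcon hapos
          linarith
        have hq1 : q.1 = c := by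
          refine le_antisymm ?_ hqc
          by_contra hcon
          push_neg at hcon
          have h1 : b * c < b * q.1 := mul_lt_mul_of_pos_left hcon hbpos
          linarith
        simp only [ccSpike, hp1, lt_self_iff_false, if_false, eq_self_iff_true, if_true] at hp
        simp only [ccSpike, hq1, lt_self_iff_false, if_false, eq_self_iff_true, if_true] at hq
        rcases le_total p.2 q.2 with hle | hle
        · refine le_trans hp ?_
          exact_mod_cast (by
            have h1 : b * p.2 ≤ b * q.2 := mul_le_mul_of_nonneg_left hle hb
            have h2 : a * p.2 + b * p.2 = p.2 := by rw [← add_mul, hab, one_mul]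
            linarith : p.2 ≤ a * p.2 + b * q.2)
        · refine le_trans hq ?_
          exact_mod_cast (by
            have h1 : a * q.2 ≤ a * p.2 := mul_le_mul_of_nonneg_left hle ha
            have h2 : a * q.2 + b * q.2 = q.2 := by rw [← add_mul, hab, one_mul]
            linarith : q.2 ≤ a * p.2 + b * q.2)

lemma cc_spike_anti (c : ℝ) (v : EReal) :
    AntitoneOn (fun θ : ℝ => ccSpike c v θ * ((θ⁻¹ : ℝ) : EReal)) (Set.Ioi 0) := by
  intro x hx y hy hxy
  simp only [mem_Ioi] at hx hy
  rcases lt_trichotomy x c with h1 | h1 | h1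
  · simp only [ccSpike, if_pos h1]
    rw [EReal.top_mul_of_pos (by exact_mod_cast inv_pos.2 hx)]
    exact le_top
  · rcases eq_or_lt_of_le hxy with rfl | hlt
    · exact le_refl _
    · have hyc : c < y := h1 ▸ hlt
      simp only [ccSpike, if_neg (not_lt.2 hyc.le), if_neg (ne_of_gt hyc)]
      rw [EReal.bot_mul_of_pos (by exact_mod_cast inv_pos.2 hy)]
      exact bot_le
  · have hyc : c < y := lt_of_lt_of_le h1 hxy
    simp only [ccSpike, if_neg (not_lt.2 hyc.le), if_neg (ne_of_gt hyc)]
    rw [EReal.bot_mul_of_pos (by exact_mod_cast inv_pos.2 hy)]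
    exact bot_le

def ccLin (s c0 : ℝ) : ℝ → EReal :=
  fun x => if x < 0 then ⊤ else ((s * x + c0 : ℝ) : EReal)

lemma cc_lin_convex (s c0 : ℝ) : EConvex (ccLin s c0) := by
  intro p hp q hq a b ha hb hab
  simp only [mem_setOf_eq, Prod.smul_fst, Prod.smul_snd, Prod.fst_add, Prod.snd_add,
    smul_eq_mul] at hp hq ⊢
  have hp0 : 0 ≤ p.1 := by
    by_contra h; push_neg at h
    simp only [ccLin, if_pos h] at hp
    exact absurd hp (by simp)
  have hq0 : 0 ≤ q.1 := by
    by_contra h; push_neg at h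
    simp only [ccLin, if_pos h] at hq
    exact absurd hq (by simp)
  simp only [ccLin, if_neg (not_lt.2 hp0)] at hp
  simp only [ccLin, if_neg (not_lt.2 hq0)] at hq
  have hx0 : 0 ≤ a * p.1 + b * q.1 := by positivity
  simp only [ccLin, if_neg (not_lt.2 hx0)]
  have hp2 : s * p.1 + c0 ≤ p.2 := by exact_mod_cast hp
  have hq2 : s * q.1 + c0 ≤ q.2 := by exact_mod_cast hq
  have h1 : a * (s * p.1 + c0) ≤ a * p.2 := mul_le_mul_of_nonneg_left hp2 ha
  have h2 : b * (s * q.1 + c0) ≤ b * q.2 := mul_le_mul_of_nonneg_left hq2 hb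
  have h3 : a * c0 + b * c0 = c0 := by rw [← add_mul, hab, one_mul]
  exact_mod_cast (by nlinarith : s * (a * p.1 + b * q.1) + c0 ≤ a * p.2 + b * q.2)

lemma cc_lin_anti (s : ℝ) {c0 : ℝ} (hc0 : 0 ≤ c0) :
    AntitoneOn (fun θ : ℝ => ccLin s c0 θ * ((θ⁻¹ : ℝ) : EReal)) (Set.Ioi 0) := by
  intro x hx y hy hxy
  simp only [mem_Ioi] at hx hy
  simp only [ccLin, if_neg (not_lt.2 hx.le), if_neg (not_lt.2 hy.le), ← EReal.coe_mul,
    EReal.coe_le_coe_iff]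
  have ex : (s * x + c0) * x⁻¹ = s + c0 / x := by field_simp
  have ey : (s * y + c0) * y⁻¹ = s + c0 / y := by field_simp
  rw [ex, ey]
  have : c0 / y ≤ c0 / x := by gcongr
  linarith

/-- Lemma `conc cut`. -/
theorem conc_cut (f κ : ℝ → EReal) (hf : KConvex f) (hκ : KConvex κ)
    (hcl : 0 < ecl f 0)
    (g : ℝ → EReal) (hg : g = fun θ => max (enat f θ) (κ θ))
    (hfin : ∃ θ : ℝ, g θ < ⊤) :
    (∀ θ : ℝ, max (enat f θ) (enat κ θ) ≤ enat g θ) ∧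
    varthetapp κ ≤ varthetapp g ∧
    (∀ θ : ℝ, (θ : EReal) < varthetapp g →
      g θ = enat g θ ∧ enat g θ = max (enat f θ) (enat κ θ)) := by
  have hgy : ∀ y, g y = max (enat f y) (κ y) := fun y => by rw [hg]
  have he_le : ∀ x, enat g x ≤ g x := cc_enat_le g
  have hF_le_g : ∀ y, enat f y ≤ g y := fun y => (hgy y) ▸ le_max_left _ _
  have hκ_le_g : ∀ y, κ y ≤ g y := fun y => (hgy y) ▸ le_max_right _ _
  have part1 : ∀ θ : ℝ, max (enat f θ) (enat κ θ) ≤ enat g θ := by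
    intro θ
    refine max_le ?_ ?_
    · exact cc_le_enat (cc_enat_convex f) hF_le_g (cc_enat_anti f) θ
    · refine iSup_le fun h => ?_
      exact cc_le_enat h.2.1 (fun y => (h.2.2.1 y).trans (hκ_le_g y)) h.2.2.2 θ
  have part2 : varthetapp κ ≤ varthetapp g := by
    refine sSup_le_sSup (Set.image_mono ?_)
    intro θ hθ
    simp only [mem_setOf_eq] at hθ ⊢
    refine le_antisymm ?_ (he_le θ)
    calc g θ = max (enat f θ) (enat κ θ) := by rw [hgy θ, hθ]
      _ ≤ enat g θ := part1 θ
  refine ⟨part1, part2, ?_⟩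
  intro θ hθ
  obtain ⟨B, hB, hltB⟩ := lt_sSup_iff.mp hθ
  obtain ⟨θ', hθ'S, rfl⟩ := hB
  simp only [mem_setOf_eq] at hθ'S
  have hθθ' : θ < θ' := by
    simp only at hltB
    exact_mod_cast hltB
  suffices hmain : g θ ≤ max (enat f θ) (enat κ θ) by
    have h1 := part1 θ
    have h2 := he_le θ
    exact ⟨le_antisymm (hmain.trans h1) h2, le_antisymm (h2.trans hmain) h1⟩
  by_cases hc : κ θ ≤ enat f θ
  · calc g θ = enat f θ := by rw [hgy θ]; exact max_eq_left hc
      _ ≤ max (enat f θ) (enat κ θ) := le_max_left _ _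
  push_neg at hc
  have hgθκ : g θ = κ θ := by rw [hgy θ]; exact max_eq_right hc.le
  suffices hκθ : κ θ ≤ enat κ θ by
    rw [hgθκ]
    exact hκθ.trans (le_max_right _ _)
  rcases le_or_gt θ 0 with hθ0 | hθpos
  · -- θ ≤ 0 : spike at 0
    have hsp_le : ∀ y, ccSpike 0 (κ 0) y ≤ κ y := by
      intro y
      unfold ccSpike
      split_ifs with h1 h2
      · rw [hκ.2.2 y h1]
      · rw [h2]
      · exact bot_le
    have hle := cc_le_enat (cc_spike_convex 0 (κ 0)) hsp_le (cc_spike_anti 0 (κ 0)) θ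
    rcases lt_or_eq_of_le hθ0 with hneg | h0
    · have hv : ccSpike 0 (κ 0) θ = ⊤ := by simp [ccSpike, hneg]
      rw [hv] at hle
      exact le_top.trans hle
    · subst h0
      have hv : ccSpike 0 (κ 0) 0 = κ 0 := by simp [ccSpike]
      rwa [hv] at hle
  -- θ > 0
  have hθ'pos : 0 < θ' := hθpos.trans hθθ'
  have he_anti := cc_enat_anti g
  by_cases hA : ∀ x, 0 ≤ x → x < θ → κ x = ⊤
  · -- spike at θ
    have hsp_le : ∀ y, ccSpike θ (κ θ) y ≤ κ y := by
      intro y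
      unfold ccSpike
      split_ifs with h1 h2
      · rcases lt_or_ge y 0 with hy | hy
        · rw [hκ.2.2 y hy]
        · rw [hA y hy h1]
      · rw [h2]
      · exact bot_le
    have hle := cc_le_enat (cc_spike_convex θ (κ θ)) hsp_le (cc_spike_anti θ (κ θ)) θ
    have hv : ccSpike θ (κ θ) θ = κ θ := by simp [ccSpike]
    rwa [hv] at hle
  push_neg at hA
  obtain ⟨p, hp0, hpθ, hpt⟩ := hA
  by_cases hκtop : κ θ = ⊤
  · -- case B1 : impossible
    exfalso
    have hktop : ∀ z, θ < z → κ z = ⊤ := by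
      intro z hz
      by_contra hzt
      exact absurd hκtop (ne_of_lt (cc_combo_lt_top hκ.1 hpθ hz hpt hzt))
    obtain ⟨q', hq'pos, hq'fin⟩ := hκ.2.1
    have hq'θ : q' < θ := by
      by_contra h
      push_neg at h
      rcases eq_or_lt_of_le h with heq | hlt2
      · rw [heq] at hκtop; rw [hκtop] at hq'fin; exact absurd hq'fin (lt_irrefl _)
      · rw [hktop q' hlt2] at hq'fin; exact absurd hq'fin (lt_irrefl _)
    have hgθ' : g θ' = ⊤ := by
      rw [hgy θ', hktop θ' hθθ', max_eq_right le_top]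
    have hgtop : ∀ x, 0 < x → x ≤ θ' → g x = ⊤ := by
      intro x h1 h2
      have he' : enat g x = ⊤ := cc_top_prop he_anti h1 h2 (hθ'S ▸ hgθ')
      exact top_le_iff.mp (he' ▸ he_le x)
    obtain ⟨w, hw⟩ := hfin
    rcases lt_trichotomy w 0 with hw0 | hw0 | hw0
    · rw [hgy w, hκ.2.2 w hw0, max_eq_right le_top] at hw
      exact absurd hw (lt_irrefl _)
    · subst hw0
      rw [hgy 0] at hw
      have hF0 : enat f 0 ≠ ⊤ := ((le_max_left _ _).trans_lt hw).ne
      have hκ0 : κ 0 ≠ ⊤ := ((le_max_right _ _).trans_lt hw).ne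
      obtain ⟨q, hqpos, hqfin⟩ := hf.2.1
      have hFq : enat f q ≠ ⊤ := (lt_of_le_of_lt (cc_enat_le f q) hqfin).ne
      set x := min q' q / 2 with hxdef
      have hminpos : 0 < min q' q := lt_min hq'pos hqpos
      have hx1 : 0 < x := by rw [hxdef]; positivity
      have hx2 : x < q' := by
        have h1 := min_le_left q' q
        rw [hxdef]; linarith
      have hx3 : x < q := by
        have h1 := min_le_right q' q
        rw [hxdef]; linarith
      have hκx : κ x < ⊤ := cc_combo_lt_top hκ.1 hx1 hx2 hκ0 (ne_of_lt hq'fin)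
      have hFx : enat f x < ⊤ := cc_combo_lt_top (cc_enat_convex f) hx1 hx3 hF0 hFq
      have hgx : g x = ⊤ := hgtop x hx1 (by linarith)
      rw [hgy x] at hgx
      have : max (enat f x) (κ x) < ⊤ := max_lt hFx hκx
      rw [hgx] at this
      exact absurd this (lt_irrefl _)
    · rcases le_or_gt w θ' with h | h
      · rw [hgtop w hw0 h] at hw
        exact absurd hw (lt_irrefl _)
      · rw [hgy w, hktop w (hθθ'.trans h), max_eq_right le_top] at hw
        exact absurd hw (lt_irrefl _)
  -- case B2 : κ θ is a real number
  have hκθbot : κ θ ≠ ⊥ := fun h => by rw [h] at hc; exact absurd hc (by simp)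
  set r := (κ θ).toReal with hrdef
  have hr : ((r : ℝ) : EReal) = κ θ := EReal.coe_toReal hκtop hκθbot
  have hgθ'top : g θ' ≠ ⊤ := by
    intro htop
    have he' : enat g θ' = ⊤ := hθ'S ▸ htop
    have heθ : enat g θ = ⊤ := cc_top_prop he_anti hθpos hθθ'.le he'
    have : g θ = ⊤ := top_le_iff.mp (heθ ▸ he_le θ)
    rw [hgθκ] at this
    exact hκtop this
  have hκθ'top : κ θ' ≠ ⊤ := by
    intro h
    exact hgθ'top (by rw [hgy θ', h, max_eq_right le_top])
  obtain ⟨tp, htp⟩ := cc_above hpt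
  have hκθ'bot : κ θ' ≠ ⊥ := by
    intro hbot
    set lam := (θ' - θ) / (θ' - p) with hlam
    set mu := (θ - p) / (θ' - p) with hmu
    have hmupos : 0 < mu := div_pos (by linarith) (by linarith)
    set t' := (r - lam * tp) / mu - 1 with ht'
    have hcb := cc_combo hκ.1 hpθ hθθ' htp (hbot ▸ bot_le : κ θ' ≤ ((t' : ℝ) : EReal))
    rw [← hr] at hcb
    have hreal : r ≤ lam * tp + mu * t' := by exact_mod_cast hcb
    have hmut : mu * t' = r - lam * tp - mu := by
      rw [ht']
      field_simp
    linarith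
  set r' := (κ θ').toReal with hr'def
  have hr' : ((r' : ℝ) : EReal) = κ θ' := EReal.coe_toReal hκθ'top hκθ'bot
  -- key inequality r' * θ ≤ r * θ'
  have hstep : ((r' * θ'⁻¹ * θ : ℝ) : EReal) ≤ enat g θ := by
    have h1 : enat g θ' * ((θ'⁻¹ : ℝ) : EReal) ≤ enat g θ * ((θ⁻¹ : ℝ) : EReal) :=
      he_anti (mem_Ioi.2 hθpos) (mem_Ioi.2 hθ'pos) hθθ'.le
    have h2 : ((r' : ℝ) : EReal) ≤ enat g θ' := by
      rw [← hθ'S, hr']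
      exact hκ_le_g θ'
    have h3 : ((r' : ℝ) : EReal) * ((θ'⁻¹ : ℝ) : EReal) ≤ enat g θ * ((θ⁻¹ : ℝ) : EReal) :=
      le_trans (mul_le_mul_of_nonneg_right h2 (by exact_mod_cast inv_nonneg.2 hθ'pos.le)) h1
    calc ((r' * θ'⁻¹ * θ : ℝ) : EReal)
        = ((r' : ℝ) : EReal) * ((θ'⁻¹ : ℝ) : EReal) * ((θ : ℝ) : EReal) := by
          rw [← EReal.coe_mul, ← EReal.coe_mul]
      _ ≤ enat g θ * ((θ⁻¹ : ℝ) : EReal) * ((θ : ℝ) : EReal) :=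
          mul_le_mul_of_nonneg_right h3 (by exact_mod_cast hθpos.le)
      _ = enat g θ * ((θ⁻¹ : ℝ) : EReal) * (((θ⁻¹)⁻¹ : ℝ) : EReal) := by rw [inv_inv]
      _ = enat g θ := cc_cancel _ (inv_ne_zero (ne_of_gt hθpos))
  have hkey : r' * θ ≤ r * θ' := by
    have h4 : ((r' * θ'⁻¹ * θ : ℝ) : EReal) ≤ ((r : ℝ) : EReal) := by
      refine le_trans hstep ?_
      rw [hr, ← hgθκ]
      exact he_le θ
    have h5 : r' * θ'⁻¹ * θ ≤ r := by exact_mod_cast h4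
    have h6 := mul_le_mul_of_nonneg_right h5 hθ'pos.le
    have h7 : r' * θ'⁻¹ * θ * θ' = r' * θ := by
      field_simp
    linarith
  -- no-dip property on [0, θ)
  have hP2 : ∀ x, 0 ≤ x → x < θ → ((r * x / θ : ℝ) : EReal) ≤ κ x := by
    intro x hx0 hxθ
    by_contra hcon
    push_neg at hcon
    obtain ⟨tx, htx, htxlt⟩ := cc_below hcon
    have hcb := cc_combo hκ.1 hxθ hθθ' htx hr'.ge
    rw [← hr] at hcb
    have hR : r ≤ (θ' - θ) / (θ' - x) * tx + (θ - x) / (θ' - x) * r' := by exact_mod_cast hcb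
    have hd : (0:ℝ) < θ' - x := by linarith
    have hR2 : r * (θ' - x) ≤ (θ' - θ) * tx + (θ - x) * r' := by
      have h4 := mul_le_mul_of_nonneg_right hR hd.le
      have h5 : ((θ' - θ) / (θ' - x) * tx + (θ - x) / (θ' - x) * r') * (θ' - x)
          = (θ' - θ) * tx + (θ - x) * r' := by
        field_simp
      linarith
    have htx2 : tx * θ < r * x := by
      have := mul_lt_mul_of_pos_right htxlt hθpos
      have h8 : r * x / θ * θ = r * x := by field_simp
      linarith
    nlinarith [mul_le_mul_of_nonneg_right hR2 hθpos.le,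
      mul_lt_mul_of_pos_left htx2 (show (0:ℝ) < θ' - θ by linarith),
      mul_pos (show (0:ℝ) < θ - x by linarith) hθpos]
  -- values of κ on [0, θ) are not ⊥
  have hκnb : ∀ x, 0 ≤ x → x < θ → κ x ≠ ⊥ := by
    intro x hx0 hxθ hbot
    have := hP2 x hx0 hxθ
    rw [hbot] at this
    exact absurd this (by simp)
  -- κ is not ⊥ to the right of θ
  have hκnbr : ∀ z, θ < z → κ z ≠ ⊥ := by
    intro z hz hbot
    set lam := (z - θ) / (z - p) with hlam
    set mu := (θ - p) / (z - p) with hmu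
    have hmupos : 0 < mu := div_pos (by linarith) (by linarith)
    set t' := (r - lam * tp) / mu - 1 with ht'
    have hcb := cc_combo hκ.1 hpθ hz htp (hbot ▸ bot_le : κ z ≤ ((t' : ℝ) : EReal))
    rw [← hr] at hcb
    have hreal : r ≤ lam * tp + mu * t' := by exact_mod_cast hcb
    have hmut : mu * t' = r - lam * tp - mu := by
      rw [ht']
      field_simp
    linarith
  -- the sup of left chord slopes
  set T : ℝ → EReal := fun x => (((θ - x)⁻¹ : ℝ) : EReal) * (((r : ℝ) : EReal) - κ x) with hT
  set σ : EReal := ⨆ x ∈ Set.Ico (0:ℝ) θ, T x with hσdef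
  have hTub : ∀ x, 0 ≤ x → x < θ → T x ≤ ((r / θ : ℝ) : EReal) := by
    intro x hx0 hxθ
    rw [hT]
    simp only
    by_cases hxt : κ x = ⊤
    · rw [hxt, EReal.sub_top, mul_comm,
        EReal.bot_mul_of_pos (by exact_mod_cast inv_pos.2 (by linarith : (0:ℝ) < θ - x))]
      exact bot_le
    · set u := (κ x).toReal with hudef
      have hu : ((u : ℝ) : EReal) = κ x := EReal.coe_toReal hxt (hκnb x hx0 hxθ)
      rw [← hu, ← EReal.coe_sub, ← EReal.coe_mul, EReal.coe_le_coe_iff]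
      have hup : r * x / θ ≤ u := by
        have := hP2 x hx0 hxθ
        rw [← hu] at this
        exact_mod_cast this
      rw [inv_mul_eq_div, div_le_div_iff₀ (by linarith) hθpos]
      have h9 : r * x ≤ u * θ := by
        have := mul_le_mul_of_nonneg_right hup hθpos.le
        have h10 : r * x / θ * θ = r * x := by field_simp
        linarith
      nlinarith
  have hσub : σ ≤ ((r / θ : ℝ) : EReal) := by
    rw [hσdef]
    exact iSup₂_le fun x hx => hTub x hx.1 hx.2
  obtain ⟨vp, hσlb⟩ : ∃ v : ℝ, ((v : ℝ) : EReal) ≤ σ := by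
    set up := (κ p).toReal with hupdef
    have hup : ((up : ℝ) : EReal) = κ p := EReal.coe_toReal hpt (hκnb p hp0 hpθ)
    refine ⟨(θ - p)⁻¹ * (r - up), ?_⟩
    have hTp : T p = (((θ - p)⁻¹ * (r - up) : ℝ) : EReal) := by
      rw [hT]
      simp only
      rw [← hup, ← EReal.coe_sub, ← EReal.coe_mul]
    rw [hσdef, ← hTp]
    exact le_iSup₂ (f := fun x (_ : x ∈ Set.Ico (0:ℝ) θ) => T x) p (Set.mem_Ico.mpr ⟨hp0, hpθ⟩)
  have hσtop : σ ≠ ⊤ := ne_top_of_le_ne_top (EReal.coe_ne_top _) hσub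
  have hσbot : σ ≠ ⊥ := fun h => absurd (h ▸ hσlb) (by simp)
  set s := σ.toReal with hsdef
  have hs : ((s : ℝ) : EReal) = σ := EReal.coe_toReal hσtop hσbot
  have hsc : s ≤ r / θ := by
    have := hs ▸ hσub
    exact_mod_cast this
  -- left bound from σ
  have hσ3 : ∀ x, 0 ≤ x → x < θ → ((r + s * (x - θ) : ℝ) : EReal) ≤ κ x := by
    intro x hx0 hxθ
    by_cases hxt : κ x = ⊤
    · rw [hxt]; exact le_top
    · set u := (κ x).toReal with hudef
      have hu : ((u : ℝ) : EReal) = κ x := EReal.coe_toReal hxt (hκnb x hx0 hxθ)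
      have hTs : T x ≤ ((s : ℝ) : EReal) := by
        rw [hs, hσdef]
        exact le_iSup₂ (f := fun x (_ : x ∈ Set.Ico (0:ℝ) θ) => T x) x (Set.mem_Ico.mpr ⟨hx0, hxθ⟩)
      rw [hT] at hTs
      simp only at hTs
      rw [← hu, ← EReal.coe_sub, ← EReal.coe_mul, EReal.coe_le_coe_iff] at hTs
      rw [← hu, EReal.coe_le_coe_iff]
      -- hTs : (θ - x)⁻¹ * (r - u) ≤ s
      have hdx : (0:ℝ) < θ - x := by linarith
      have := mul_le_mul_of_nonneg_right hTs hdx.le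
      rw [inv_mul_eq_div, div_mul_cancel₀ _ (ne_of_gt hdx)] at this
      nlinarith
  -- right bound from σ
  have hσ4 : ∀ z, θ < z → ((r + s * (z - θ) : ℝ) : EReal) ≤ κ z := by
    intro z hz
    by_cases hzt : κ z = ⊤
    · rw [hzt]; exact le_top
    · set w := (κ z).toReal with hwdef
      have hw : ((w : ℝ) : EReal) = κ z := EReal.coe_toReal hzt (hκnbr z hz)
      have hchord : σ ≤ (((w - r) / (z - θ) : ℝ) : EReal) := by
        rw [hσdef]
        refine iSup₂_le fun x hx => ?_
        obtain ⟨hx0, hxθ⟩ := hx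
        by_cases hxt : κ x = ⊤
        · rw [hT]
          simp only
          rw [hxt, EReal.sub_top, mul_comm,
            EReal.bot_mul_of_pos (by exact_mod_cast inv_pos.2 (by linarith : (0:ℝ) < θ - x))]
          exact bot_le
        · set u := (κ x).toReal with hudef
          have hu : ((u : ℝ) : EReal) = κ x := EReal.coe_toReal hxt (hκnb x hx0 hxθ)
          rw [hT]
          simp only
          rw [← hu, ← EReal.coe_sub, ← EReal.coe_mul, EReal.coe_le_coe_iff]
          -- convexity: r (z - x) ≤ (z - θ) u + (θ - x) w
          have hcb := cc_combo hκ.1 hxθ hz hu.ge hw.ge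
          rw [← hr] at hcb
          have hR : r ≤ (z - θ) / (z - x) * u + (θ - x) / (z - x) * w := by exact_mod_cast hcb
          have hdzx : (0:ℝ) < z - x := by linarith
          have hR2 : r * (z - x) ≤ (z - θ) * u + (θ - x) * w := by
            have h4 := mul_le_mul_of_nonneg_right hR hdzx.le
            have h5 : ((z - θ) / (z - x) * u + (θ - x) / (z - x) * w) * (z - x)
                = (z - θ) * u + (θ - x) * w := by field_simp
            linarith
          rw [inv_mul_eq_div, div_le_div_iff₀ (by linarith) (by linarith)]
          nlinarith
      have hsw : s ≤ (w - r) / (z - θ) := by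
        have := hs ▸ hchord
        exact_mod_cast this
      rw [← hw, EReal.coe_le_coe_iff]
      have hdz : (0:ℝ) < z - θ := by linarith
      have := mul_le_mul_of_nonneg_right hsw hdz.le
      rw [div_mul_cancel₀ _ (ne_of_gt hdz)] at this
      nlinarith
  -- assemble the line
  set c0 := r - s * θ with hc0def
  have hc0 : 0 ≤ c0 := by
    have := mul_le_mul_of_nonneg_right hsc hθpos.le
    rw [div_mul_cancel₀ _ (ne_of_gt hθpos)] at this
    rw [hc0def]
    linarith
  have hlin_le : ∀ y, ccLin s c0 y ≤ κ y := by
    intro y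
    unfold ccLin
    split_ifs with h1
    · rw [hκ.2.2 y h1]
    · push_neg at h1
      rcases lt_trichotomy y θ with h2 | h2 | h2
      · have := hσ3 y h1 h2
        have heq : s * y + c0 = r + s * (y - θ) := by rw [hc0def]; ring
        rwa [heq]
      · subst h2
        have heq : s * y + c0 = r := by rw [hc0def]; ring
        rw [heq, hr]
      · have := hσ4 y h2
        have heq : s * y + c0 = r + s * (y - θ) := by rw [hc0def]; ring
        rwa [heq]
  have hle := cc_le_enat (cc_lin_convex s c0) hlin_le (cc_lin_anti s hc0) θ
  have hv : ccLin s c0 θ = κ θ := by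
    unfold ccLin
    rw [if_neg (not_lt.2 hθpos.le)]
    have heq : s * θ + c0 = r := by rw [hc0def]; ring
    rw [heq, hr]
  rwa [hv] at hle
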